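/- arXiv:1802.09462 — 2 statements merged into one kernel-verified Lean document; each statement's English description precedes it below -/
import Mathlib

section
/- Theorem (state convergence of LAC systems): Let ≺ be a strict partial order on a finite set U of operations and apply : S → U → S a state transition function such that any two ≺-incomparable operations commute (for all u v, ¬(u ≺ v) → ¬(v ≺ u) → ∀ s, apply (apply s u) v = apply (apply s v) u). Then any two linear extensions of ≺, viewed as duplicate-free enumerations l₁ and l₂ of U respecting ≺, satisfy List.foldl apply s0 l₁ = List.foldl apply s0 l₂ for every initial state s0. -/
private lemma foldl_move {U S : Type*} [DecidableEq U] (apply : S → U → S) :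
    ∀ (l : List U) (u : U), u ∈ l →
      (∀ v ∈ l.takeWhile (· ≠ u), ∀ s, apply (apply s u) v = apply (apply s v) u) →
      ∀ s, List.foldl apply s l = List.foldl apply (apply s u) (l.erase u) := by
  intro l
  induction l with
  | nil => intro u hu; simp at hu
  | cons a t ih =>
    intro u hu hcm s
    by_cases hau : a = u
    · subst hau; simp [List.erase_cons_head]
    · have hut : u ∈ t := by
        rcases List.mem_cons.mp hu with h | h
        · exact absurd h.symm hau
        · exact h
      have htw : List.takeWhile (· ≠ u) (a :: t) = a :: List.takeWhile (· ≠ u) t := by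
        simp [List.takeWhile_cons, hau]
      have hca : ∀ s, apply (apply s u) a = apply (apply s a) u := by
        intro s; exact hcm a (by rw [htw]; exact List.mem_cons_self) s
      have hcm' : ∀ v ∈ t.takeWhile (· ≠ u), ∀ s,
          apply (apply s u) v = apply (apply s v) u := by
        intro v hv s
        exact hcm v (by rw [htw]; exact List.mem_cons_of_mem _ hv) s
      rw [List.erase_cons_tail (by simpa using hau)]
      simp only [List.foldl_cons]
      rw [ih u hut hcm', hca]

private lemma aux_conv {U S : Type*} [DecidableEq U] (prec : U → U → Prop)
    (apply : S → U → S)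
    (hcomm : ∀ u v, ¬ prec u v → ¬ prec v u → ∀ s,
      apply (apply s u) v = apply (apply s v) u) :
    ∀ (l₂ l₁ : List U), l₁.Perm l₂ →
      l₁.Pairwise (fun a b => ¬ prec b a) →
      l₂.Pairwise (fun a b => ¬ prec b a) →
      ∀ s, List.foldl apply s l₁ = List.foldl apply s l₂ := by
  intro l₂
  induction l₂ with
  | nil => intro l₁ hp _ _ s; rw [List.perm_nil.mp hp]
  | cons u t ih =>
    intro l₁ hp hpw₁ hpw₂ s
    have hu₁ : u ∈ l₁ := hp.mem_iff.mpr List.mem_cons_self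
    -- every element in the takeWhile prefix commutes with u
    have hcm : ∀ v ∈ l₁.takeWhile (· ≠ u), ∀ s,
        apply (apply s u) v = apply (apply s v) u := by
      intro v hv s'
      have hvl : v ∈ l₁ := (List.takeWhile_sublist _).mem hv
      have hvne : v ≠ u := by
        have := List.mem_takeWhile_imp hv
        simpa using this
      -- ¬ prec v u : v ∈ t (tail of l₂), pairwise on l₂
      have hvt : v ∈ t := by
        have : v ∈ u :: t := hp.mem_iff.mp hvl
        rcases List.mem_cons.mp this with h | h
        · exact absurd h hvne
        · exact h
      have h1 : ¬ prec v u := (List.pairwise_cons.mp hpw₂).1 v hvt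
      -- ¬ prec u v : v appears before u in l₁
      have h2 : ¬ prec u v := by
        have hsplit : l₁ = l₁.takeWhile (· ≠ u) ++ l₁.dropWhile (· ≠ u) :=
          (List.takeWhile_append_dropWhile (p := (· ≠ u)) (l := l₁)).symm
        have hud : u ∈ l₁.dropWhile (· ≠ u) := by
          by_contra hud
          have : u ∈ l₁.takeWhile (· ≠ u) := by
            rw [hsplit] at hu₁
            rcases List.mem_append.mp hu₁ with h | h
            · exact h
            · exact absurd h hud
          have := List.mem_takeWhile_imp this
          simp at this
        have hpw := hpw₁
        rw [hsplit, List.pairwise_append] at hpw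
        exact hpw.2.2 v hv u hud
      exact hcomm u v h2 h1 s'
    rw [foldl_move apply l₁ u hu₁ hcm s]
    have hperm' : (l₁.erase u).Perm t := by
      have := hp.erase u
      rwa [List.erase_cons_head] at this
    have hpw₁' : (l₁.erase u).Pairwise (fun a b => ¬ prec b a) :=
      List.Pairwise.sublist (List.erase_sublist (a := u) (l := l₁)) hpw₁
    exact ih (l₁.erase u) hperm' hpw₁' (List.pairwise_cons.mp hpw₂).2 (apply s u)

theorem lac_state_convergence {U S : Type*} [Fintype U] [DecidableEq U]
    (prec : U → U → Prop)
    (hIrrefl : ∀ u, ¬ prec u u)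
    (hTrans : ∀ u v w, prec u v → prec v w → prec u w)
    (apply : S → U → S)
    (hcomm : ∀ u v, ¬ prec u v → ¬ prec v u → ∀ s,
      apply (apply s u) v = apply (apply s v) u)
    (l₁ l₂ : List U)
    (h₁nodup : l₁.Nodup) (h₂nodup : l₂.Nodup)
    (h₁mem : ∀ u : U, u ∈ l₁) (h₂mem : ∀ u : U, u ∈ l₂)
    (h₁ext : ∀ u v, prec u v → l₁.idxOf u < l₁.idxOf v)
    (h₂ext : ∀ u v, prec u v → l₂.idxOf u < l₂.idxOf v)
    (s0 : S) :
    List.foldl apply s0 l₁ = List.foldl apply s0 l₂ := by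
  have key : ∀ (l : List U), l.Nodup → (∀ u v, prec u v → l.idxOf u < l.idxOf v) →
      l.Pairwise (fun a b => ¬ prec b a) := by
    intro l hnd hext
    rw [List.pairwise_iff_get]
    intro i j hij hba
    have hi := hext _ _ hba
    rw [List.get_idxOf hnd, List.get_idxOf hnd] at hi
    exact absurd hij (by omega)
  have hperm : l₁.Perm l₂ := by
    apply List.Perm.symm
    apply (List.perm_ext_iff_of_nodup h₂nodup h₁nodup).mpr
    intro a; simp [h₁mem a, h₂mem a]
  exact aux_conv prec apply hcomm l₂ l₁ hperm (key l₁ h₁nodup h₁ext) (key l₂ h₂nodup h₂ext) s0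
end

section
/- Commuting adjacent swaps suffice: if l₁ and l₂ are duplicate-free lists that are permutations of each other and both are linear extensions of a strict partial order ≺, then l₁ can be transformed into l₂ by adjacent transpositions each of which swaps two ≺-incomparable elements. -/
/-- One adjacent transposition step swapping two prec-incomparable adjacent elements. -/
def IncompAdjSwap {U : Type*} (prec : U → U → Prop) (l l' : List U) : Prop :=
  ∃ (P Q : List U) (a b : U),
    l = P ++ [a, b] ++ Q ∧ l' = P ++ [b, a] ++ Q ∧ ¬ prec a b ∧ ¬ prec b a

private lemma swap_cons {U : Type*} {prec : U → U → Prop} {l l' : List U} (c : U)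
    (h : IncompAdjSwap prec l l') : IncompAdjSwap prec (c :: l) (c :: l') := by
  obtain ⟨P, Q, a, b, h1, h2, h3, h4⟩ := h
  exact ⟨c :: P, Q, a, b, by simp [h1], by simp [h2], h3, h4⟩

private lemma rtg_cons {U : Type*} {prec : U → U → Prop} {l l' : List U} (c : U)
    (h : Relation.ReflTransGen (IncompAdjSwap prec) l l') :
    Relation.ReflTransGen (IncompAdjSwap prec) (c :: l) (c :: l') :=
  Relation.ReflTransGen.lift (fun x => c :: x) (fun _ _ => swap_cons c) l l' h

private lemma bubble {U : Type*} {prec : U → U → Prop} (a : U) :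
    ∀ (P Q : List U), (∀ b ∈ P, ¬ prec a b ∧ ¬ prec b a) →
    Relation.ReflTransGen (IncompAdjSwap prec) (P ++ a :: Q) (a :: (P ++ Q))
  | [], Q, _ => Relation.ReflTransGen.refl
  | b :: P, Q, h => by
    have hb := h b (by simp)
    have ih := bubble a P Q (fun x hx => h x (by simp [hx]))
    have step : IncompAdjSwap prec (b :: a :: (P ++ Q)) (a :: b :: (P ++ Q)) :=
      ⟨[], P ++ Q, b, a, by simp, by simp, hb.2, hb.1⟩
    exact (rtg_cons b ih).trans (Relation.ReflTransGen.single step)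

private lemma aux {U : Type*} {prec : U → U → Prop} :
    ∀ (l₂ l₁ : List U), l₁.Perm l₂ → l₁.Nodup →
    l₁.Pairwise (fun u v => ¬ prec v u) → l₂.Pairwise (fun u v => ¬ prec v u) →
    Relation.ReflTransGen (IncompAdjSwap prec) l₁ l₂
  | [], l₁, hperm, _, _, _ => by
    rw [List.perm_nil.mp hperm]
  | a :: t, l₁, hperm, hnd, hp1, hp2 => by
    have ha : a ∈ l₁ := hperm.mem_iff.mpr (by simp)
    obtain ⟨P, Q, rfl⟩ := List.append_of_mem ha
    have hincomp : ∀ b ∈ P, ¬ prec a b ∧ ¬ prec b a := by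
      intro b hb
      constructor
      · have := (List.pairwise_append.mp hp1).2.2 b hb a (by simp)
        exact this
      · have hbt : b ∈ t := by
          have hbl2 : b ∈ a :: t := hperm.mem_iff.mp (by simp [hb])
          have : b ≠ a := by
            intro h; subst h
            exact (List.disjoint_of_nodup_append hnd) hb (by simp)
          simpa [this] using hbl2
        exact (List.pairwise_cons.mp hp2).1 b hbt
    have h1 := bubble a P Q hincomp
    have hperm' : (P ++ Q).Perm t := by
      have : (a :: (P ++ Q)).Perm (a :: t) := (List.perm_middle.symm).trans hperm
      exact this.cons_inv
    have hsub : (P ++ Q).Sublist (P ++ a :: Q) := by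
      exact List.Sublist.append_left (List.sublist_cons_self a Q) P
    have ih := aux t (P ++ Q) hperm' (hnd.sublist hsub) (hp1.sublist hsub)
      (List.pairwise_cons.mp hp2).2
    exact h1.trans (rtg_cons a ih)

theorem linext_connected_by_incomparable_swaps {U : Type*} [DecidableEq U]
    (prec : U → U → Prop)
    (hIrrefl : ∀ u, ¬ prec u u)
    (hTrans : ∀ u v w, prec u v → prec v w → prec u w)
    (l₁ l₂ : List U) (hperm : l₁.Perm l₂)
    (h₁nodup : l₁.Nodup) (h₂nodup : l₂.Nodup)
    (h₁ext : ∀ u v, prec u v → u ∈ l₁ → v ∈ l₁ → l₁.idxOf u < l₁.idxOf v)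
    (h₂ext : ∀ u v, prec u v → u ∈ l₂ → v ∈ l₂ → l₂.idxOf u < l₂.idxOf v) :
    Relation.ReflTransGen (IncompAdjSwap prec) l₁ l₂ := by
  have key : ∀ (l : List U), l.Nodup →
      (∀ u v, prec u v → u ∈ l → v ∈ l → l.idxOf u < l.idxOf v) →
      l.Pairwise (fun u v => ¬ prec v u) := by
    intro l hnd hext
    rw [List.pairwise_iff_getElem]
    intro i j hi hj hij hprec
    have := hext _ _ hprec (l.getElem_mem hj) (l.getElem_mem hi)
    rw [List.Nodup.idxOf_getElem hnd, List.Nodup.idxOf_getElem hnd] at this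
    omega
  exact aux l₂ l₁ hperm h₁nodup (key l₁ h₁nodup h₁ext) (key l₂ h₂nodup h₂ext)
end
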